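/- Let (a_λ)_λ and (b_λ)_λ be the two specializations of the Hall–Littlewood data at 0 < t < 1: γ(λ) := t^{2n(λ)}/b_λ(t) and, for n ≥ ℓ(λ), κ_n(λ) := t^{∑_{i≥1}(2i−1−n)λ_i} · v_n(t)/v^{(n)}_λ(t). Then for each partition λ the sequence κ_n(λ)·t^{(n−1)|λ|} is monotone increasing in n and converges to γ(λ) as n → ∞. -/

import Mathlib

open Finset Filter

/-- `v_m(t) = ∏_{i=1}^m (1-t^i)/(1-t)`. -/
noncomputable def vR (t : ℝ) (m : ℕ) : ℝ := ∏ i ∈ Icc 1 m, (1 - t ^ i) / (1 - t)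

/-- `n(λ) = ∑_i (i-1) λ_i`, with the partition given as a decreasing list `l`. -/
def nstatL (l : List ℕ) : ℕ := ∑ j ∈ range l.length, j * l.getD j 0

/-- `b_λ(t) = ∏_{i≥1} ∏_{j=1}^{m_i(λ)} (1-t^j)`. -/
noncomputable def bL (t : ℝ) (l : List ℕ) : ℝ :=
  ∏ i ∈ l.toFinset, ∏ j ∈ Icc 1 (l.count i), (1 - t ^ j)

/-- `v^{(n)}_λ(t) = ∏_{i≥0} v_{m_i(λ)}(t)` for `λ` padded with zeros to length `n`. -/
noncomputable def vPad (t : ℝ) (l : List ℕ) (n : ℕ) : ℝ :=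
  vR t (n - l.length) * ∏ i ∈ l.toFinset, vR t (l.count i)

/-- `κ_n(λ) = t^{∑_i (2i-1-n) λ_i} · v_n(t)/v^{(n)}_λ(t)`. -/
noncomputable def kappa (t : ℝ) (l : List ℕ) (n : ℕ) : ℝ :=
  t ^ (∑ j ∈ range l.length, (2 * ((j : ℤ) + 1) - 1 - (n : ℤ)) * (l.getD j 0 : ℤ)) *
    vR t n / vPad t l n

/-- `γ(λ) = t^{2 n(λ)} / b_λ(t)`. -/
noncomputable def gammaL (t : ℝ) (l : List ℕ) : ℝ := t ^ (2 * nstatL l) / bL t l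

lemma list_sum_eq_getD (l : List ℕ) : l.sum = ∑ j ∈ range l.length, l.getD j 0 := by
  induction l with
  | nil => simp
  | cons a l ih =>
    rw [List.sum_cons, ih, List.length_cons, Finset.sum_range_succ']
    simp
    exact Nat.add_comm _ _

/-- For `n ≥ ℓ(λ)` the sequence `κ_n(λ) · t^{(n-1)|λ|}` is monotone increasing in `n`
and converges to `γ(λ)` as `n → ∞`. -/
theorem stmt16 (t : ℝ) (ht0 : 0 < t) (ht1 : t < 1) (l : List ℕ)
    (hsort : l.Pairwise (· ≥ ·)) (hpos : ∀ a ∈ l, 0 < a) :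
    Monotone (fun k : ℕ =>
      kappa t l (l.length + k) * t ^ ((((l.length + k : ℕ) : ℤ) - 1) * (l.sum : ℤ))) ∧
    Tendsto (fun k : ℕ =>
        kappa t l (l.length + k) * t ^ ((((l.length + k : ℕ) : ℤ) - 1) * (l.sum : ℤ)))
      atTop (nhds (gammaL t l)) := by
  have htne : t ≠ 0 := ht0.ne'
  have h1t : (0:ℝ) < 1 - t := by linarith
  have hfac : ∀ i : ℕ, i ≠ 0 → (0:ℝ) < 1 - t ^ i := fun i hi => by
    have := pow_lt_one₀ ht0.le ht1 hi
    linarith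
  have hvpos : ∀ m : ℕ, 0 < vR t m := by
    intro m
    refine Finset.prod_pos fun i hi => div_pos (hfac i ?_) h1t
    exact Nat.one_le_iff_ne_zero.mp (Finset.mem_Icc.mp hi).1
  have hbpos : 0 < bL t l := by
    refine Finset.prod_pos fun i _ => Finset.prod_pos fun j hj => hfac j ?_
    exact Nat.one_le_iff_ne_zero.mp (Finset.mem_Icc.mp hj).1
  have hgpos : 0 < gammaL t l := div_pos (pow_pos ht0 _) hbpos
  have hcount : ∑ a ∈ l.toFinset, l.count a = l.length := by
    simpa using Multiset.toFinset_sum_count_eq (l : Multiset ℕ)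
  -- vR t m as a quotient
  have hvq : ∀ m : ℕ, vR t m = (∏ j ∈ Icc 1 m, (1 - t ^ j)) / (1 - t) ^ m := by
    intro m
    rw [vR, Finset.prod_div_distrib, Finset.prod_const, Nat.card_Icc]
    simp
  have hb : ∏ i ∈ l.toFinset, vR t (l.count i) = bL t l / (1 - t) ^ l.length := by
    simp only [hvq]
    rw [Finset.prod_div_distrib, Finset.prod_pow_eq_pow_sum, hcount, bL]
  -- key identity
  have key : ∀ k : ℕ,
      kappa t l (l.length + k) * t ^ ((((l.length + k : ℕ) : ℤ) - 1) * (l.sum : ℤ))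
        = gammaL t l * ∏ j ∈ Ioc 0 l.length, (1 - t ^ (k + j)) := by
    intro k
    have hexp : (∑ j ∈ range l.length,
          (2 * ((j : ℤ) + 1) - 1 - ((l.length + k : ℕ) : ℤ)) * (l.getD j 0 : ℤ))
        + (((l.length + k : ℕ) : ℤ) - 1) * (l.sum : ℤ) = 2 * (nstatL l : ℤ) := by
      have hs : (l.sum : ℤ) = ∑ j ∈ range l.length, (l.getD j 0 : ℤ) := by
        rw [list_sum_eq_getD]; push_cast; ring
      have hn : (nstatL l : ℤ) = ∑ j ∈ range l.length, (j : ℤ) * (l.getD j 0 : ℤ) := by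
        rw [nstatL]; push_cast; ring
      rw [hs, hn, Finset.mul_sum, Finset.mul_sum, ← Finset.sum_add_distrib]
      apply Finset.sum_congr rfl
      intro j _
      ring
    -- split vR (l.length + k)
    have hv : vR t (l.length + k)
        = vR t k * ∏ i ∈ Ioc k (k + l.length), ((1 - t ^ i) / (1 - t)) := by
      have hIccIoc : ∀ m : ℕ, Icc 1 m = Ioc 0 m := fun m => Finset.Icc_add_one_left_eq_Ioc 0 m
      rw [vR, vR, hIccIoc, hIccIoc, Nat.add_comm l.length k,
        ← Finset.prod_Ioc_consecutive _ (Nat.zero_le k) (Nat.le_add_right k l.length)]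
    have hIoc : ∏ i ∈ Ioc k (k + l.length), ((1 - t ^ i) / (1 - t))
        = (∏ j ∈ Ioc 0 l.length, (1 - t ^ (k + j))) / (1 - t) ^ l.length := by
      have hmap : Ioc k (k + l.length) = (Ioc 0 l.length).map (addLeftEmbedding k) := by
        rw [Finset.map_add_left_Ioc]; simp
      rw [hmap, Finset.prod_map, Finset.prod_div_distrib, Finset.prod_const, Nat.card_Ioc]
      simp [addLeftEmbedding]
    have hvp : vPad t l (l.length + k) = vR t k * (bL t l / (1 - t) ^ l.length) := by
      rw [vPad, Nat.add_sub_cancel_left, hb]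
    rw [kappa, hvp, hv, hIoc, gammaL]
    rw [div_mul_eq_mul_div, mul_right_comm, ← zpow_add₀ htne, hexp]
    have h2 : t ^ (2 * (nstatL l : ℤ)) = t ^ (2 * nstatL l) := by
      rw [show (2 * (nstatL l : ℤ)) = ((2 * nstatL l : ℕ) : ℤ) by push_cast; ring,
        zpow_natCast]
    rw [h2]
    have hvk := (hvpos k).ne'
    have hbne := hbpos.ne'
    have h1tne : ((1:ℝ) - t) ≠ 0 := h1t.ne'
    field_simp
  have hQmono : Monotone fun k : ℕ => ∏ j ∈ Ioc 0 l.length, (1 - t ^ (k + j)) := by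
    intro a b hab
    refine Finset.prod_le_prod (fun j hj => ?_) (fun j hj => ?_)
    · have := pow_le_one₀ ht0.le ht1.le (n := a + j)
      linarith
    · have : t ^ (b + j) ≤ t ^ (a + j) :=
        pow_le_pow_of_le_one ht0.le ht1.le (Nat.add_le_add_right hab j)
      linarith
  constructor
  · intro a b hab
    simp only [key]
    exact mul_le_mul_of_nonneg_left (hQmono hab) hgpos.le
  · have hQ : Tendsto (fun k : ℕ => ∏ j ∈ Ioc 0 l.length, (1 - t ^ (k + j))) atTop
        (nhds (∏ j ∈ Ioc 0 l.length, (1:ℝ))) := by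
      refine tendsto_finset_prod _ fun j _ => ?_
      have h0 : Tendsto (fun k : ℕ => t ^ (k + j)) atTop (nhds 0) := by
        simp only [pow_add]
        simpa using (tendsto_pow_atTop_nhds_zero_of_lt_one ht0.le ht1).mul_const (t ^ j)
      simpa using tendsto_const_nhds.sub h0
    simp only [key]
    have := hQ.const_mul (gammaL t l)
    simpa using this
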